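/- Let the singular value thresholding operator be defined for a matrix A with SVD A = UΣVᵀ and τ > 0 by S_τ(A) = U·diag(max(σ_i − τ, 0))·Vᵀ. Then S_τ(A) is the unique minimizer of the function M ↦ τ‖M‖_* + (1/2)‖M − A‖_F² over all matrices M of the same size. -/

import Mathlib

open Matrix
/-- The nuclear norm of a real matrix: the sum of its singular values. -/
noncomputable def nuclearNorm {m n : Type*} [Fintype m] [Fintype n] [DecidableEq n]
    (A : Matrix m n ℝ) : ℝ :=
  ∑ i, Real.sqrt ((Matrix.posSemidef_conjTranspose_mul_self A).isHermitian.eigenvalues i)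

lemma trace_conj {n : ℕ} (P : Matrix (Fin n) (Fin n) ℝ) (hP : Pᵀ * P = 1)
    (D : Matrix (Fin n) (Fin n) ℝ) : Matrix.trace (P * D * Pᵀ) = Matrix.trace D := by
  rw [Matrix.trace_mul_cycle, hP, one_mul]

lemma spectral_real {n : ℕ} {B : Matrix (Fin n) (Fin n) ℝ} (hB : B.IsHermitian) :
    ∃ W : Matrix (Fin n) (Fin n) ℝ, Wᵀ * W = 1 ∧ W * Wᵀ = 1 ∧
      B = W * Matrix.diagonal hB.eigenvalues * Wᵀ := by
  refine ⟨hB.eigenvectorUnitary, ?_, ?_, ?_⟩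
  · have := Matrix.mem_unitaryGroup_iff'.mp hB.eigenvectorUnitary.2
    rwa [star_eq_conjTranspose, conjTranspose_eq_transpose_of_trivial] at this
  · have := Matrix.mem_unitaryGroup_iff.mp hB.eigenvectorUnitary.2
    rwa [star_eq_conjTranspose, conjTranspose_eq_transpose_of_trivial] at this
  · have := hB.spectral_theorem
    rwa [Unitary.conjStarAlgAut_apply, star_eq_conjTranspose, conjTranspose_eq_transpose_of_trivial,
      RCLike.ofReal_real_eq_id, Function.id_comp] at this

lemma psd_conj {n : ℕ} (P : Matrix (Fin n) (Fin n) ℝ) (g : Fin n → ℝ) (hg : ∀ j, 0 ≤ g j) :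
    (P * Matrix.diagonal g * Pᵀ).PosSemidef := by
  have h := (Matrix.posSemidef_diagonal_iff.mpr hg).mul_mul_conjTranspose_same P
  rwa [conjTranspose_eq_transpose_of_trivial] at h

lemma conj_sq {n : ℕ} (P : Matrix (Fin n) (Fin n) ℝ) (hP : Pᵀ * P = 1) (g : Fin n → ℝ) :
    (P * Matrix.diagonal g * Pᵀ) ^ 2 = P * Matrix.diagonal (fun j => g j * g j) * Pᵀ := by
  rw [pow_two]
  calc P * Matrix.diagonal g * Pᵀ * (P * Matrix.diagonal g * Pᵀ)
      = P * Matrix.diagonal g * (Pᵀ * P) * Matrix.diagonal g * Pᵀ := by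
        simp only [Matrix.mul_assoc]
    _ = P * (Matrix.diagonal g * Matrix.diagonal g) * Pᵀ := by
        rw [hP, Matrix.mul_one]; simp only [Matrix.mul_assoc]
    _ = P * Matrix.diagonal (fun j => g j * g j) * Pᵀ := by
        rw [Matrix.diagonal_mul_diagonal]

lemma sum_sqrt_eigenvalues {n : ℕ} {B : Matrix (Fin n) (Fin n) ℝ} (hB : B.PosSemidef)
    (P : Matrix (Fin n) (Fin n) ℝ) (hP : Pᵀ * P = 1) (g : Fin n → ℝ) (hg : ∀ j, 0 ≤ g j)
    (hBP : B = P * Matrix.diagonal g * Pᵀ) :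
    ∑ i, Real.sqrt (hB.isHermitian.eigenvalues i) = ∑ j, Real.sqrt (g j) := by
  obtain ⟨W, hW1, hW2, hWB⟩ := spectral_real hB.isHermitian
  set C : Matrix (Fin n) (Fin n) ℝ :=
    P * Matrix.diagonal (fun j => Real.sqrt (g j)) * Pᵀ with hC
  set C' : Matrix (Fin n) (Fin n) ℝ :=
    W * Matrix.diagonal (fun j => Real.sqrt (hB.isHermitian.eigenvalues j)) * Wᵀ with hC'
  have hCpsd : C.PosSemidef := psd_conj P _ (fun j => Real.sqrt_nonneg _)
  have hC'psd : C'.PosSemidef := psd_conj W _ (fun j => Real.sqrt_nonneg _)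
  have hCsq : C ^ 2 = B := by
    rw [hC, conj_sq P hP, hBP]
    have : (fun j => Real.sqrt (g j) * Real.sqrt (g j)) = g := by
      funext j; exact Real.mul_self_sqrt (hg j)
    rw [this]
  have hC'sq : C' ^ 2 = B := by
    rw [hC', conj_sq W hW1]
    have : (fun j => Real.sqrt (hB.isHermitian.eigenvalues j) *
        Real.sqrt (hB.isHermitian.eigenvalues j)) = hB.isHermitian.eigenvalues := by
      funext j; exact Real.mul_self_sqrt (hB.eigenvalues_nonneg j)
    rw [this, ← hWB]
  have hCC' : C = C' := by
    open MatrixOrder in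
    rw [← (CFC.sqrt_eq_iff B C hB.nonneg hCpsd.nonneg).mpr (by rw [← sq]; exact hCsq),
      ← (CFC.sqrt_eq_iff B C' hB.nonneg hC'psd.nonneg).mpr (by rw [← sq]; exact hC'sq)]
  have t1 : Matrix.trace C = ∑ j, Real.sqrt (g j) := by
    rw [hC, trace_conj P hP, Matrix.trace_diagonal]
  have t2 : Matrix.trace C' = ∑ j, Real.sqrt (hB.isHermitian.eigenvalues j) := by
    rw [hC', trace_conj W hW1, Matrix.trace_diagonal]
  rw [← t1, ← t2, hCC']

lemma nuclearNorm_eq {m n : ℕ} (N : Matrix (Fin m) (Fin n) ℝ)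
    (P : Matrix (Fin n) (Fin n) ℝ) (hP : Pᵀ * P = 1) (g : Fin n → ℝ) (hg : ∀ j, 0 ≤ g j)
    (hN : Nᵀ * N = P * Matrix.diagonal g * Pᵀ) :
    nuclearNorm N = ∑ j, Real.sqrt (g j) := by
  exact sum_sqrt_eigenvalues (Matrix.posSemidef_conjTranspose_mul_self N) P hP g hg
    (by rw [conjTranspose_eq_transpose_of_trivial, hN])

lemma ip_trace {m n : ℕ} (X M : Matrix (Fin m) (Fin n) ℝ) :
    ∑ i, ∑ j, X i j * M i j = Matrix.trace (Xᵀ * M) := by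
  rw [Matrix.trace]
  simp only [Matrix.diag, Matrix.mul_apply, Matrix.transpose_apply]
  exact Finset.sum_comm

lemma key_ineq {m n : ℕ} {τ : ℝ} (hτ : 0 ≤ τ) (X M : Matrix (Fin m) (Fin n) ℝ)
    (V : Matrix (Fin n) (Fin n) ℝ) (hV2 : V * Vᵀ = 1)
    (e : Fin n → ℝ) (heτ : ∀ j, e j ≤ τ ^ 2)
    (hX : Xᵀ * X = V * Matrix.diagonal e * Vᵀ) :
    ∑ i, ∑ j, X i j * M i j ≤ τ * nuclearNorm M := by
  set hH := Matrix.posSemidef_conjTranspose_mul_self M with hHdef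
  obtain ⟨W, hW1, hW2, hWB⟩ := spectral_real hH.isHermitian
  set lam := hH.isHermitian.eigenvalues with hlam
  have hMM : Mᵀ * M = W * Matrix.diagonal lam * Wᵀ := by
    rw [← conjTranspose_eq_transpose_of_trivial, ← hWB]
  have step1 : ∑ i, ∑ j, X i j * M i j = ∑ k, ∑ i, (X * W) i k * (M * W) i k := by
    rw [ip_trace]
    have h1 : (X * W)ᵀ * (M * W) = Wᵀ * (Xᵀ * M * W) := by
      simp only [Matrix.transpose_mul, Matrix.mul_assoc]
    have h2 : Matrix.trace ((X * W)ᵀ * (M * W)) = Matrix.trace (Xᵀ * M) := by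
      rw [h1, Matrix.trace_mul_comm Wᵀ, Matrix.mul_assoc, hW2, Matrix.mul_one]
    rw [← h2, Matrix.trace]
    simp only [Matrix.diag, Matrix.mul_apply, Matrix.transpose_apply]
  set Y := Vᵀ * W with hY
  have hYY : Yᵀ * Y = 1 := by
    rw [hY, Matrix.transpose_mul, Matrix.transpose_transpose, Matrix.mul_assoc,
      ← Matrix.mul_assoc V Vᵀ W, hV2, Matrix.one_mul, hW1]
  have hPm : (X * W)ᵀ * (X * W) = Yᵀ * Matrix.diagonal e * Y := by
    have e1 : (X * W)ᵀ * (X * W) = Wᵀ * (Xᵀ * X) * W := by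
      simp only [Matrix.transpose_mul, Matrix.mul_assoc]
    rw [e1, hX, hY]
    simp only [Matrix.transpose_mul, Matrix.transpose_transpose, Matrix.mul_assoc]
  have hQm : (M * W)ᵀ * (M * W) = Matrix.diagonal lam := by
    have e1 : (M * W)ᵀ * (M * W) = Wᵀ * (Mᵀ * M) * W := by
      simp only [Matrix.transpose_mul, Matrix.mul_assoc]
    rw [e1, hMM, Matrix.mul_assoc Wᵀ _ W, Matrix.mul_assoc (W * Matrix.diagonal lam) Wᵀ W,
      hW1, Matrix.mul_one, ← Matrix.mul_assoc, hW1, Matrix.one_mul]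
  have hQ : ∀ k, ∑ i, (M * W) i k ^ 2 = lam k := by
    intro k
    have : ((M * W)ᵀ * (M * W)) k k = lam k := by rw [hQm]; simp
    rw [← this, Matrix.mul_apply]
    simp [Matrix.transpose_apply, pow_two]
  have hP : ∀ k, ∑ i, (X * W) i k ^ 2 ≤ τ ^ 2 := by
    intro k
    have e1 : ∑ i, (X * W) i k ^ 2 = ((X * W)ᵀ * (X * W)) k k := by
      rw [Matrix.mul_apply]; simp [Matrix.transpose_apply, pow_two]
    have e2 : ((X * W)ᵀ * (X * W)) k k = ∑ j, e j * Y j k ^ 2 := by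
      rw [hPm, Matrix.mul_apply]
      refine Finset.sum_congr rfl fun j _ => ?_
      rw [Matrix.mul_diagonal, Matrix.transpose_apply]
      ring
    have e3 : ∑ j, Y j k ^ 2 = 1 := by
      have : (Yᵀ * Y) k k = 1 := by rw [hYY]; simp
      rw [← this, Matrix.mul_apply]
      simp [Matrix.transpose_apply, pow_two]
    calc ∑ i, (X * W) i k ^ 2 = ∑ j, e j * Y j k ^ 2 := by rw [e1, e2]
      _ ≤ ∑ j, τ ^ 2 * Y j k ^ 2 := by
          refine Finset.sum_le_sum fun j _ => ?_
          exact mul_le_mul_of_nonneg_right (heτ j) (sq_nonneg _)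
      _ = τ ^ 2 := by rw [← Finset.mul_sum, e3, mul_one]
  have hnn : nuclearNorm M = ∑ k, Real.sqrt (lam k) := rfl
  rw [step1, hnn, Finset.mul_sum]
  refine Finset.sum_le_sum fun k _ => ?_
  calc ∑ i, (X * W) i k * (M * W) i k
      ≤ Real.sqrt (∑ i, (X * W) i k ^ 2) * Real.sqrt (∑ i, (M * W) i k ^ 2) :=
        Real.sum_mul_le_sqrt_mul_sqrt _ _ _
    _ ≤ τ * Real.sqrt (lam k) := by
        rw [hQ k]
        refine mul_le_mul ?_ le_rfl (Real.sqrt_nonneg _) hτ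
        calc Real.sqrt (∑ i, (X * W) i k ^ 2) ≤ Real.sqrt (τ ^ 2) :=
              Real.sqrt_le_sqrt (hP k)
          _ = τ := Real.sqrt_sq hτ

lemma rectDiag_mul {m n : ℕ} (f g : ℕ → ℝ) :
    (Matrix.of fun (i : Fin m) (j : Fin n) => if (i : ℕ) = (j : ℕ) then f i else 0)ᵀ *
    (Matrix.of fun (i : Fin m) (j : Fin n) => if (i : ℕ) = (j : ℕ) then g i else 0) =
    Matrix.diagonal (fun j : Fin n => if (j : ℕ) < m then f j * g j else 0) := by
  ext j j'
  rw [Matrix.mul_apply]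
  by_cases hjj : j = j'
  · subst hjj
    rw [Matrix.diagonal_apply_eq]
    by_cases hj : (j : ℕ) < m
    · rw [if_pos hj]
      rw [Finset.sum_eq_single (⟨(j : ℕ), hj⟩ : Fin m)]
      · simp
      · intro i _ hi
        have : (i : ℕ) ≠ (j : ℕ) := fun h => hi (Fin.ext h)
        simp [this]
      · simp
    · rw [if_neg hj]
      refine Finset.sum_eq_zero fun i _ => ?_
      have : (i : ℕ) ≠ (j : ℕ) := fun h => hj (h ▸ i.isLt)
      simp [this]
  · rw [Matrix.diagonal_apply_ne _ hjj]
    refine Finset.sum_eq_zero fun i _ => ?_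
    by_cases h1 : (i : ℕ) = (j : ℕ)
    · have h2 : (i : ℕ) ≠ (j' : ℕ) := fun h => hjj (Fin.ext (h1 ▸ h))
      simp only [Matrix.transpose_apply, Matrix.of_apply, if_pos h1, if_neg h2, mul_zero]
    · simp [h1]

lemma conj_mul_conj {m n : ℕ} (U : Matrix (Fin m) (Fin m) ℝ) (hU : Uᵀ * U = 1)
    (D D' : Matrix (Fin m) (Fin n) ℝ) (V : Matrix (Fin n) (Fin n) ℝ) :
    (U * D * Vᵀ)ᵀ * (U * D' * Vᵀ) = V * (Dᵀ * D') * Vᵀ := by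
  simp only [Matrix.transpose_mul, Matrix.transpose_transpose, Matrix.mul_assoc]
  rw [← Matrix.mul_assoc Uᵀ U, hU, Matrix.one_mul]

/-- **Singular value thresholding solves the nuclear-norm proximal problem**:
if `A = U Σ Vᵀ` is an SVD of `A` (with `U`, `V` orthogonal and `Σ` rectangular
diagonal with nonnegative entries `σ`), then
`S_τ(A) = U · diag(max(σ_i − τ, 0)) · Vᵀ` is the unique minimizer of
`M ↦ τ‖M‖_* + (1/2)‖M − A‖_F²`. -/
theorem svt_is_unique_minimizer (m n : ℕ) (τ : ℝ) (hτ : 0 < τ)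
    (A : Matrix (Fin m) (Fin n) ℝ)
    (U : Matrix (Fin m) (Fin m) ℝ) (V : Matrix (Fin n) (Fin n) ℝ)
    (hU : Uᵀ * U = 1) (hV : Vᵀ * V = 1)
    (σ : ℕ → ℝ) (hσ : ∀ i, 0 ≤ σ i)
    (hSVD : A = U * (Matrix.of fun (i : Fin m) (j : Fin n) =>
      if (i : ℕ) = (j : ℕ) then σ (i : ℕ) else 0) * Vᵀ)
    (S : Matrix (Fin m) (Fin n) ℝ)
    (hS : S = U * (Matrix.of fun (i : Fin m) (j : Fin n) =>
      if (i : ℕ) = (j : ℕ) then max (σ (i : ℕ) - τ) 0 else 0) * Vᵀ) :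
    ∀ M : Matrix (Fin m) (Fin n) ℝ, M ≠ S →
      τ * nuclearNorm S + (1 / 2) * (∑ i, ∑ j, (S i j - A i j) ^ 2) <
        τ * nuclearNorm M + (1 / 2) * (∑ i, ∑ j, (M i j - A i j) ^ 2) := by
  intro M hM
  have hV2 : V * Vᵀ = 1 := mul_eq_one_comm.mp hV
  have hmin0 : ∀ j : ℕ, 0 ≤ min (σ j) τ := fun j => le_min (hσ j) hτ.le
  -- X = A - S = U * Dd * Vᵀ
  have hXf : A - S = U * (Matrix.of fun (i : Fin m) (j : Fin n) =>
      if (i : ℕ) = (j : ℕ) then min (σ (i : ℕ)) τ else 0) * Vᵀ := by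
    rw [hSVD, hS, ← Matrix.sub_mul, ← Matrix.mul_sub]
    congr 2
    ext i j
    simp only [Matrix.sub_apply, Matrix.of_apply]
    by_cases h : (i : ℕ) = (j : ℕ)
    · simp only [if_pos h]
      rcases le_total (σ (i : ℕ)) τ with hc | hc
      · rw [max_eq_right (sub_nonpos.mpr hc), min_eq_left hc, sub_zero]
      · rw [max_eq_left (sub_nonneg.mpr hc), min_eq_right hc]; ring
    · simp only [if_neg h, sub_zero]
  have hXX : (A - S)ᵀ * (A - S) = V * Matrix.diagonal (fun j : Fin n =>
      if (j : ℕ) < m then min (σ (j : ℕ)) τ * min (σ (j : ℕ)) τ else 0) * Vᵀ := by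
    rw [hXf, conj_mul_conj U hU,
      rectDiag_mul (fun i => min (σ i) τ) (fun i => min (σ i) τ)]
  have heτ : ∀ j : Fin n,
      (if (j : ℕ) < m then min (σ (j : ℕ)) τ * min (σ (j : ℕ)) τ else 0) ≤ τ ^ 2 := by
    intro j
    split_ifs with h
    · rw [pow_two]
      exact mul_le_mul (min_le_right _ _) (min_le_right _ _) (hmin0 _) hτ.le
    · positivity
  -- nuclear norm of S
  have hSS : Sᵀ * S = V * Matrix.diagonal (fun j : Fin n =>
      if (j : ℕ) < m then max (σ (j : ℕ) - τ) 0 * max (σ (j : ℕ) - τ) 0 else 0) * Vᵀ := by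
    rw [hS, conj_mul_conj U hU,
      rectDiag_mul (fun i => max (σ i - τ) 0) (fun i => max (σ i - τ) 0)]
  have hnnS : nuclearNorm S =
      ∑ j : Fin n, if (j : ℕ) < m then max (σ (j : ℕ) - τ) 0 else 0 := by
    rw [nuclearNorm_eq S V hV _ ?_ hSS]
    · refine Finset.sum_congr rfl fun j _ => ?_
      split_ifs with h
      · exact Real.sqrt_mul_self (le_max_right _ _)
      · exact Real.sqrt_zero
    · intro j
      split_ifs with h
      · exact mul_nonneg (le_max_right _ _) (le_max_right _ _)
      · exact le_rfl
  -- inner product of X with S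
  have hXS : ∑ i, ∑ j, (A - S) i j * S i j =
      τ * ∑ j : Fin n, if (j : ℕ) < m then max (σ (j : ℕ) - τ) 0 else 0 := by
    rw [ip_trace]
    conv_lhs => rw [hXf, hS]
    rw [conj_mul_conj U hU,
      rectDiag_mul (fun i => min (σ i) τ) (fun i => max (σ i - τ) 0),
      trace_conj V hV, Matrix.trace_diagonal, Finset.mul_sum]
    refine Finset.sum_congr rfl fun j _ => ?_
    split_ifs with h
    · rcases le_total (σ (j : ℕ)) τ with hc | hc
      · rw [max_eq_right (sub_nonpos.mpr hc), mul_zero, mul_zero]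
      · rw [min_eq_right hc]
    · rw [mul_zero]
  -- key inequality for M
  have hkey : ∑ i, ∑ j, (A - S) i j * M i j ≤ τ * nuclearNorm M :=
    key_ineq hτ.le (A - S) M V hV2 _ heτ hXX
  -- positivity of ‖M - S‖²
  have hpos : 0 < ∑ i, ∑ j, (M i j - S i j) ^ 2 := by
    have hex : ∃ i j, M i j ≠ S i j := by
      by_contra h
      push_neg at h
      exact hM (by ext i j; exact h i j)
    obtain ⟨i0, j0, hij⟩ := hex
    have h0 : (0 : ℝ) < (M i0 j0 - S i0 j0) ^ 2 := by
      have := sub_ne_zero.mpr hij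
      positivity
    refine Finset.sum_pos' (fun i _ => Finset.sum_nonneg fun j _ => sq_nonneg _)
      ⟨i0, Finset.mem_univ _, Finset.sum_pos'
        (fun j _ => sq_nonneg _) ⟨j0, Finset.mem_univ _, h0⟩⟩
  -- expansion of the quadratic term
  have hexp : ∑ i, ∑ j, (M i j - A i j) ^ 2 =
      (∑ i, ∑ j, (M i j - S i j) ^ 2) - 2 * (∑ i, ∑ j, (A - S) i j * M i j)
        + 2 * (∑ i, ∑ j, (A - S) i j * S i j) + ∑ i, ∑ j, (S i j - A i j) ^ 2 := by
    simp only [Matrix.sub_apply, Finset.mul_sum, ← Finset.sum_add_distrib,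
      ← Finset.sum_sub_distrib]
    refine Finset.sum_congr rfl fun i _ => Finset.sum_congr rfl fun j _ => ?_
    ring
  rw [hnnS]
  rw [hXS] at hexp
  nlinarith [hkey, hpos, hexp]
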